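/- Let H be a real Hilbert space, α ∈ (0, 1/2], T : H → H an α-averaged nonexpansive operator, and t ∈ (0,1). Let x ∈ H with Tx ≠ x, set θ := −⟨Tx − x, Tx − T²x⟩ / ‖Tx − x‖², T^θ := T + θ(T − I), and x⁺ := (1−t)T²x + t T^θ x. Assume Tx⁺ ≠ x⁺ and set θ⁺ := −⟨Tx⁺ − x⁺, Tx⁺ − T²x⁺⟩ / ‖Tx⁺ − x⁺‖², T^{θ⁺} := T + θ⁺(T − I), and τ := (1+θ⁺)/(1+θ). Then ‖T^{θ⁺}x⁺ − T^θ x‖ ≤ (τ + |1 − τ|)·‖x⁺ − x‖. -/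

import Mathlib

open RealInnerProductSpace Filter Topology

/-- `T` is nonexpansive: `‖T x − T y‖ ≤ ‖x − y‖` for all `x, y`. -/
def Nonexpansive {H : Type*} [NormedAddCommGroup H] [InnerProductSpace ℝ H]
    (T : H → H) : Prop :=
  ∀ x y, ‖T x - T y‖ ≤ ‖x - y‖

/-- `T` is `α`-averaged nonexpansive: `T = (1−α)I + αN` for a nonexpansive `N`. -/
def AveragedNE {H : Type*} [NormedAddCommGroup H] [InnerProductSpace ℝ H]
    (α : ℝ) (T : H → H) : Prop :=
  ∃ N : H → H, Nonexpansive N ∧ ∀ x, T x = (1 - α) • x + α • N x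

section Aux

variable {H : Type*} [NormedAddCommGroup H] [InnerProductSpace ℝ H]

lemma averaged_nonexp {α : ℝ} {T : H → H} (hα0 : 0 ≤ α) (hα1 : α ≤ 1)
    (hT : AveragedNE α T) : Nonexpansive T := by
  obtain ⟨N, hN, hTN⟩ := hT
  intro u v
  have h : T u - T v = (1 - α) • (u - v) + α • (N u - N v) := by
    rw [hTN u, hTN v]; module
  rw [h]
  calc ‖(1 - α) • (u - v) + α • (N u - N v)‖
      ≤ ‖(1 - α) • (u - v)‖ + ‖α • (N u - N v)‖ := norm_add_le _ _
    _ = (1 - α) * ‖u - v‖ + α * ‖N u - N v‖ := by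
        rw [norm_smul, norm_smul, Real.norm_of_nonneg (by linarith),
          Real.norm_of_nonneg hα0]
    _ ≤ (1 - α) * ‖u - v‖ + α * ‖u - v‖ := by
        have := hN u v; nlinarith
    _ = ‖u - v‖ := by ring

lemma inner_dd'_bounds {α : ℝ} {T : H → H} (hα : α ∈ Set.Ioc (0 : ℝ) (1/2))
    (hT : AveragedNE α T) (u : H) :
    0 ≤ ⟪T u - u, T (T u) - T u⟫ ∧ ⟪T u - u, T (T u) - T u⟫ ≤ ‖T u - u‖ ^ 2 := by
  obtain ⟨hα0, hα2⟩ := hα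
  have hTne : Nonexpansive T := averaged_nonexp hα0.le (by linarith) hT
  obtain ⟨N, hN, hTN⟩ := hT
  have hkey : T (T u) - T u - (1 - α) • (T u - u) = α • (N (T u) - N u) := by
    rw [hTN (T u), hTN u]; module
  have hnorm : ‖T (T u) - T u - (1 - α) • (T u - u)‖ ≤ α * ‖T u - u‖ := by
    rw [hkey, norm_smul, Real.norm_of_nonneg hα0.le]
    have := hN (T u) u
    nlinarith
  set d : H := T u - u with hd
  set d' : H := T (T u) - T u with hd'
  have hsq : ‖d' - (1 - α) • d‖ ^ 2 =
      ‖d'‖ ^ 2 - 2 * (1 - α) * ⟪d', d⟫ + (1 - α) ^ 2 * ‖d‖ ^ 2 := by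
    rw [norm_sub_sq_real, real_inner_smul_right, norm_smul,
      Real.norm_of_nonneg (by linarith : (0:ℝ) ≤ 1 - α)]
    ring
  have hcomm : ⟪d', d⟫ = ⟪d, d'⟫ := real_inner_comm _ _
  have hsq2 : ‖d'‖ ^ 2 - 2 * (1 - α) * ⟪d, d'⟫ + (1 - α) ^ 2 * ‖d‖ ^ 2
      ≤ α ^ 2 * ‖d‖ ^ 2 := by
    have h1 : ‖d' - (1 - α) • d‖ ^ 2 ≤ (α * ‖d‖) ^ 2 := by
      have h0 : (0:ℝ) ≤ ‖d' - (1 - α) • d‖ := norm_nonneg _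
      nlinarith
    rw [hsq, hcomm] at h1
    nlinarith
  constructor
  · nlinarith [sq_nonneg ‖d'‖, sq_nonneg ‖d‖]
  · have h2 : ‖d'‖ ≤ ‖d‖ := hTne (T u) u
    have h3 := real_inner_le_norm d d'
    nlinarith [norm_nonneg d, norm_nonneg d']

lemma ext_nonexp {α θ : ℝ} {T : H → H} (hα : α ∈ Set.Ioc (0 : ℝ) (1/2))
    (hθ0 : 0 ≤ θ) (hθ1 : θ ≤ 1) (hT : AveragedNE α T) (u v : H) :
    ‖(T u + θ • (T u - u)) - (T v + θ • (T v - v))‖ ≤ ‖u - v‖ := by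
  obtain ⟨hα0, hα2⟩ := hα
  obtain ⟨N, hN, hTN⟩ := hT
  have hβ0 : 0 ≤ α * (1 + θ) := by positivity
  have hβ1 : α * (1 + θ) ≤ 1 := by nlinarith
  have hid : (T u + θ • (T u - u)) - (T v + θ • (T v - v))
      = (1 - α * (1 + θ)) • (u - v) + (α * (1 + θ)) • (N u - N v) := by
    rw [hTN u, hTN v]; module
  rw [hid]
  calc ‖(1 - α * (1 + θ)) • (u - v) + (α * (1 + θ)) • (N u - N v)‖
      ≤ ‖(1 - α * (1 + θ)) • (u - v)‖ + ‖(α * (1 + θ)) • (N u - N v)‖ :=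
        norm_add_le _ _
    _ = (1 - α * (1 + θ)) * ‖u - v‖ + (α * (1 + θ)) * ‖N u - N v‖ := by
        rw [norm_smul, norm_smul, Real.norm_of_nonneg (by linarith),
          Real.norm_of_nonneg hβ0]
    _ ≤ (1 - α * (1 + θ)) * ‖u - v‖ + (α * (1 + θ)) * ‖u - v‖ := by
        have := hN u v; nlinarith
    _ = ‖u - v‖ := by ring

lemma key_orth (d d' : H) (θ t : ℝ) (h : ⟪d, d'⟫ = θ * ‖d‖ ^ 2)
    (ht1 : t ≤ 1) :
    (1 - t) * ‖d' - θ • d‖ ≤ ‖(1 + t * θ) • d + (1 - t) • d'‖ := by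
  set w : H := d' - θ • d with hw
  have hdw : ⟪d, w⟫ = 0 := by
    rw [hw, inner_sub_right, real_inner_smul_right, h,
      real_inner_self_eq_norm_sq]
    ring
  have hvec : (1 + t * θ) • d + (1 - t) • d' = (1 + θ) • d + (1 - t) • w := by
    rw [hw]; module
  rw [hvec]
  have hsq : ‖(1 + θ) • d + (1 - t) • w‖ ^ 2
      = (1 + θ) ^ 2 * ‖d‖ ^ 2 + (1 - t) ^ 2 * ‖w‖ ^ 2 := by
    rw [norm_add_sq_real, real_inner_smul_left, real_inner_smul_right, hdw,
      norm_smul, norm_smul, Real.norm_eq_abs, Real.norm_eq_abs]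
    rw [mul_pow, mul_pow, sq_abs, sq_abs]
    ring
  nlinarith [norm_nonneg ((1 + θ) • d + (1 - t) • w), norm_nonneg w,
    sq_nonneg ((1 + θ) * ‖d‖), mul_nonneg (norm_nonneg ((1+θ) • d + (1-t) • w)) (norm_nonneg w)]

end Aux

theorem stmt_12 {H : Type*} [NormedAddCommGroup H] [InnerProductSpace ℝ H]
    [CompleteSpace H]
    (α : ℝ) (hα : α ∈ Set.Ioc (0 : ℝ) (1/2))
    (T : H → H) (hT : AveragedNE α T)
    (t : ℝ) (ht : t ∈ Set.Ioo (0 : ℝ) 1)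
    (x : H) (hx : T x ≠ x)
    (θ : ℝ) (hθ : θ = -⟪T x - x, T x - T (T x)⟫ / ‖T x - x‖ ^ 2)
    (xp : H) (hxp : xp = (1 - t) • T (T x) + t • (T x + θ • (T x - x)))
    (hxp' : T xp ≠ xp)
    (θp : ℝ) (hθp : θp = -⟪T xp - xp, T xp - T (T xp)⟫ / ‖T xp - xp‖ ^ 2)
    (τ : ℝ) (hτ : τ = (1 + θp) / (1 + θ)) :
    ‖(T xp + θp • (T xp - xp)) - (T x + θ • (T x - x))‖ ≤
      (τ + |1 - τ|) * ‖xp - x‖ := by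
  obtain ⟨ht0, ht1⟩ := ht
  -- rewrite the numerators with the right sign
  have hsign : ∀ u : H, -⟪T u - u, T u - T (T u)⟫ = ⟪T u - u, T (T u) - T u⟫ := by
    intro u
    rw [← inner_neg_right, neg_sub]
  have hdx : ‖T x - x‖ ≠ 0 := by
    simpa using sub_ne_zero.mpr hx
  have hdxp : ‖T xp - xp‖ ≠ 0 := by
    simpa using sub_ne_zero.mpr hxp'
  obtain ⟨hI0, hI1⟩ := inner_dd'_bounds hα hT x
  obtain ⟨hJ0, hJ1⟩ := inner_dd'_bounds hα hT xp
  rw [hsign x] at hθ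
  rw [hsign xp] at hθp
  have hdx2 : (0:ℝ) < ‖T x - x‖ ^ 2 := by positivity
  have hdxp2 : (0:ℝ) < ‖T xp - xp‖ ^ 2 := by positivity
  have hθ0 : 0 ≤ θ := by rw [hθ]; exact div_nonneg hI0 hdx2.le
  have hθ1 : θ ≤ 1 := by rw [hθ, div_le_one hdx2]; exact hI1
  have hθp0 : 0 ≤ θp := by rw [hθp]; exact div_nonneg hJ0 hdxp2.le
  have hθp1 : θp ≤ 1 := by rw [hθp, div_le_one hdxp2]; exact hJ1
  have h1θ : (0:ℝ) < 1 + θ := by linarith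
  have hτ0 : 0 ≤ τ := by
    rw [hτ]; exact div_nonneg (by linarith) h1θ.le
  have hθeq : ⟪T x - x, T (T x) - T x⟫ = θ * ‖T x - x‖ ^ 2 := by
    rw [hθ]; field_simp
  -- the decomposition identity
  have h1 : θp = τ * (1 + θ) - 1 := by
    rw [hτ]; field_simp; ring
  have hid : (T xp + θp • (T xp - xp)) - (T x + θ • (T x - x))
      = τ • ((T xp + θ • (T xp - xp)) - (T x + θ • (T x - x)))
        + (1 - τ) • (xp - (T x + θ • (T x - x))) := by
    rw [h1]; module
  have hA : ‖(T xp + θ • (T xp - xp)) - (T x + θ • (T x - x))‖ ≤ ‖xp - x‖ :=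
    ext_nonexp hα hθ0 hθ1 hT xp x
  have hB : ‖xp - (T x + θ • (T x - x))‖ ≤ ‖xp - x‖ := by
    have e1 : xp - (T x + θ • (T x - x))
        = (1 - t) • ((T (T x) - T x) - θ • (T x - x)) := by
      rw [hxp]; module
    have e2 : xp - x = (1 + t * θ) • (T x - x) + (1 - t) • (T (T x) - T x) := by
      rw [hxp]; module
    rw [e1, e2, norm_smul, Real.norm_of_nonneg (by linarith : (0:ℝ) ≤ 1 - t)]
    exact key_orth _ _ θ t hθeq (by linarith)
  calc ‖(T xp + θp • (T xp - xp)) - (T x + θ • (T x - x))‖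
      = ‖τ • ((T xp + θ • (T xp - xp)) - (T x + θ • (T x - x)))
          + (1 - τ) • (xp - (T x + θ • (T x - x)))‖ := by rw [← hid]
    _ ≤ ‖τ • ((T xp + θ • (T xp - xp)) - (T x + θ • (T x - x)))‖
          + ‖(1 - τ) • (xp - (T x + θ • (T x - x)))‖ := norm_add_le _ _
    _ = τ * ‖(T xp + θ • (T xp - xp)) - (T x + θ • (T x - x))‖
          + |1 - τ| * ‖xp - (T x + θ • (T x - x))‖ := by
        rw [norm_smul, norm_smul, Real.norm_of_nonneg hτ0, Real.norm_eq_abs]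
    _ ≤ τ * ‖xp - x‖ + |1 - τ| * ‖xp - x‖ := by
        gcongr
    _ = (τ + |1 - τ|) * ‖xp - x‖ := by ring
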